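/- Let γ : {1,2,3,…} → ℤ^d be an admissible outgoing lead with tangent τ_γ, and let U = T∘ℂ be a quantum walk whose coin satisfies |⟨τ_γ(t+1), C(γ(t)) τ_γ(t)⟩| = 1 for all t ≥ 1. Let P_γ(t) denote the rank-one projection onto the vector |γ(t), τ_γ(t)⟩ ∈ ℓ²(ℤ^d; ℂ^{2d}). Then: (i) P_γ(t)P_γ(s) = 0 for all t ≠ s; (ii) U^n P_γ(1) (U*)^n = P_γ(1+n) for all n ≥ 1; (iii) Ran P_γ(1) is a wandering subspace for U; (iv) for the total projection ℙ_γ := ∑_{t≥1} P_γ(t) and Φ := U*ℙ_γU − ℙ_γ, the index is ind(Φ) = dim ker(Φ − 1) − dim ker(Φ + 1) = 1. -/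

import Mathlib

open ContinuousLinearMap

noncomputable section

/-- Sites of the lattice `ℤ^d`. -/
abbrev Site (d : ℕ) := Fin d → ℤ

/-- The coin space `ℂ^{2d}`. -/
abbrev CoinSp (d : ℕ) := EuclideanSpace ℂ (Fin (2 * d))

/-- The Hilbert space `ℓ²(ℤ^d; ℂ^{2d})`. -/
abbrev QWH (d : ℕ) := lp (fun _ : Site d => CoinSp d) 2

/-- The lattice vector of the `i`-th quantum direction. -/
def dirVec (d : ℕ) (i : Fin (2 * d)) : Site d :=
  fun j => if (j : ℕ) = (i : ℕ) / 2 then (if (i : ℕ) % 2 = 0 then 1 else -1) else 0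

/-- The coin-space basis vector `|τ⟩` of the `i`-th direction. -/
def coinVec (d : ℕ) (i : Fin (2 * d)) : CoinSp d := EuclideanSpace.single i 1

/-- The vector `|x₀, τ₀⟩ ∈ ℓ²(ℤ^d; ℂ^{2d})`, i.e. `x ↦ δ_{x,x₀} |τ₀⟩`. -/
def leadVec (d : ℕ) (x : Site d) (i : Fin (2 * d)) : QWH d :=
  lp.single 2 x (coinVec d i)

/-- The rank-one projection onto `|x₀, τ₀⟩`. -/
def leadProj (d : ℕ) (x : Site d) (i : Fin (2 * d)) : QWH d →L[ℂ] QWH d :=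
  (innerSL ℂ (leadVec d x i)).smulRight (leadVec d x i)

/-! ### Auxiliary lemmas -/

lemma stmt12_inner_leadVec (d : ℕ) (x y : Site d) (i j : Fin (2 * d)) :
    @inner ℂ _ _ (leadVec d x i) (leadVec d y j)
      = if x = y ∧ i = j then 1 else 0 := by
  rw [leadVec, leadVec, lp.inner_single_left]
  by_cases hxy : x = y
  · subst hxy
    rw [lp.single_apply_self, coinVec, coinVec, EuclideanSpace.inner_single_left,
      EuclideanSpace.single_apply]
    simp [eq_comm]
  · rw [lp.single_apply_ne _ _ _ hxy]
    simp [hxy]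

lemma stmt12_leadProj_apply (d : ℕ) (x : Site d) (i : Fin (2 * d)) (ψ : QWH d) :
    leadProj d x i ψ = (@inner ℂ _ _ (leadVec d x i) ψ) • leadVec d x i := by
  simp [leadProj]

/-- The equivalence between `ℕ` and positive naturals. -/
def natSuccEquiv : ℕ ≃ {t : ℕ // 1 ≤ t} :=
  ⟨fun n => ⟨n + 1, by omega⟩, fun t => t.1 - 1,
    fun n => by simp, fun t => by ext; have := t.2; simp; omega⟩

lemma stmt12_conj_mul_of_norm_one {c : ℂ} (hc : ‖c‖ = 1) :
    (starRingEnd ℂ) c * c = 1 := by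
  rw [RCLike.conj_mul, hc]; norm_num

lemma stmt12_mul_conj_of_norm_one {c : ℂ} (hc : ‖c‖ = 1) :
    c * (starRingEnd ℂ) c = 1 := by
  rw [mul_comm]; exact stmt12_conj_mul_of_norm_one hc

/-- Conjugating a rank-one projection by `U` when `U v = c • v'`. -/
lemma stmt12_conj_rankOne (d : ℕ) (U : QWH d →L[ℂ] QWH d)
    (v v' : QWH d) (c : ℂ) (hc : ‖c‖ = 1) (hv : U v = c • v') :
    U * ((innerSL ℂ v).smulRight v) * adjoint U
      = (innerSL ℂ v').smulRight v' := by
  ext1 ψ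
  have h1 : @inner ℂ _ _ v (adjoint U ψ) = @inner ℂ _ _ (U v) ψ :=
    adjoint_inner_right U v ψ
  simp only [ContinuousLinearMap.mul_apply, smulRight_apply, innerSL_apply_apply, map_smul, h1, hv,
    inner_smul_left, smul_smul]
  rw [mul_assoc, mul_comm (@inner ℂ _ _ v' ψ) c, ← mul_assoc,
    stmt12_conj_mul_of_norm_one hc, one_mul]

set_option maxHeartbeats 2000000 in
theorem stmt_12 (d : ℕ) (hd : 1 ≤ d)
    (γ : ℕ → Site d) (τ : ℕ → Fin (2 * d))
    (hstep : ∀ t : ℕ, 2 ≤ t → γ t - γ (t - 1) = dirVec d (τ t))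
    (hτ1 : τ 1 = τ 2)
    (hadm : ∀ s t : ℕ, 1 ≤ s → 1 ≤ t → (γ s, τ s) = (γ t, τ t) → s = t)
    (C : Site d → (CoinSp d →L[ℂ] CoinSp d))
    (hCunit : ∀ x, adjoint (C x) * C x = 1 ∧ C x * adjoint (C x) = 1)
    (hCγ : ∀ t : ℕ, 1 ≤ t →
      ‖@inner ℂ _ _ (coinVec d (τ (t + 1))) (C (γ t) (coinVec d (τ t)))‖ = 1)
    (U : QWH d →L[ℂ] QWH d)
    (hUunit : adjoint U * U = 1 ∧ U * adjoint U = 1)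
    (hU : ∀ (ψ : QWH d) (x : Site d) (i : Fin (2 * d)),
      (U ψ) x i = (C (x - dirVec d i) (ψ (x - dirVec d i))) i)
    (Ptot : QWH d →L[ℂ] QWH d)
    (hPtot : ∀ ψ : QWH d,
      HasSum (fun t : {t : ℕ // 1 ≤ t} => leadProj d (γ t.1) (τ t.1) ψ) (Ptot ψ))
    (Φ : QWH d →L[ℂ] QWH d) (hΦ : Φ = adjoint U * Ptot * U - Ptot) :
    (∀ s t : ℕ, 1 ≤ s → 1 ≤ t → s ≠ t →
      leadProj d (γ t) (τ t) * leadProj d (γ s) (τ s) = 0) ∧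
    (∀ n : ℕ, 1 ≤ n →
      U ^ n * leadProj d (γ 1) (τ 1) * (adjoint U) ^ n = leadProj d (γ (1 + n)) (τ (1 + n))) ∧
    (∀ x ∈ LinearMap.range (leadProj d (γ 1) (τ 1) : QWH d →ₗ[ℂ] QWH d),
      ∀ y ∈ LinearMap.range (leadProj d (γ 1) (τ 1) : QWH d →ₗ[ℂ] QWH d),
      ∀ k : ℕ, 1 ≤ k → @inner ℂ _ _ ((U ^ k) x) y = 0) ∧
    (FiniteDimensional ℂ (LinearMap.ker ((Φ - 1 : QWH d →L[ℂ] QWH d) : QWH d →ₗ[ℂ] QWH d)) ∧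
     FiniteDimensional ℂ (LinearMap.ker ((Φ + 1 : QWH d →L[ℂ] QWH d) : QWH d →ₗ[ℂ] QWH d)) ∧
     (Module.finrank ℂ (LinearMap.ker ((Φ - 1 : QWH d →L[ℂ] QWH d) : QWH d →ₗ[ℂ] QWH d)) : ℤ)
        - (Module.finrank ℂ (LinearMap.ker ((Φ + 1 : QWH d →L[ℂ] QWH d) : QWH d →ₗ[ℂ] QWH d)) : ℤ) = 1) := by
  -- Orthogonality of distinct lead vectors
  have hinner_ne : ∀ s t : ℕ, 1 ≤ s → 1 ≤ t → s ≠ t →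
      @inner ℂ _ _ (leadVec d (γ t) (τ t)) (leadVec d (γ s) (τ s)) = 0 := by
    intro s t hs ht hne
    rw [stmt12_inner_leadVec]
    rw [if_neg]
    rintro ⟨h1, h2⟩
    exact hne (hadm t s ht hs (by rw [h1, h2])).symm
  -- the one-step propagation of lead vectors
  have hstep1 : ∀ t : ℕ, 1 ≤ t → ∃ c : ℂ, ‖c‖ = 1 ∧
      U (leadVec d (γ t) (τ t)) = c • leadVec d (γ (t + 1)) (τ (t + 1)) := by
    intro t ht
    set e := coinVec d (τ t) with he
    set e' := coinVec d (τ (t + 1)) with he'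
    have hne : ‖e‖ = 1 := by rw [he, coinVec, EuclideanSpace.norm_single]; norm_num
    have hne' : ‖e'‖ = 1 := by rw [he', coinVec, EuclideanSpace.norm_single]; norm_num
    have hCe : ‖C (γ t) e‖ = 1 := by
      have h1 : @inner ℂ _ _ (C (γ t) e) (C (γ t) e) = @inner ℂ _ _ e e := by
        have := adjoint_inner_right (C (γ t)) e (C (γ t) e)
        rw [← this]
        have h2 : adjoint (C (γ t)) (C (γ t) e) = e := by
          have := congrArg (fun A => A e) (hCunit (γ t)).1
          simpa [mul_apply] using this
        rw [h2]
      rw [inner_self_eq_norm_sq_to_K, inner_self_eq_norm_sq_to_K] at h1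
      have h3 : ‖C (γ t) e‖ ^ 2 = ‖e‖ ^ 2 := by exact_mod_cast h1
      nlinarith [norm_nonneg (C (γ t) e), norm_nonneg e]
    have hx0 : e' ≠ 0 := by intro h; rw [h] at hne'; simp at hne'
    have hy0 : C (γ t) e ≠ 0 := by intro h; rw [h] at hCe; simp at hCe
    obtain ⟨r, hr0, hre⟩ := (norm_inner_eq_norm_iff hx0 hy0).mp
      (by rw [hne', hCe, one_mul]; exact hCγ t ht)
    have hr1 : ‖r‖ = 1 := by
      have := congrArg norm hre
      rw [norm_smul, hne', mul_one, hCe] at this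
      exact this.symm
    refine ⟨r, hr1, ?_⟩
    -- the lattice step
    have hs : γ (t + 1) - γ t = dirVec d (τ (t + 1)) := by
      have := hstep (t + 1) (by omega)
      simpa using this
    apply lp.ext
    funext x; ext i
    rw [hU]
    show (C (x - dirVec d i) ((lp.single 2 (γ t) e : QWH d) (x - dirVec d i))) i
        = ((r • (lp.single 2 (γ (t+1)) e' : QWH d)) : QWH d) x i
    by_cases h : x - dirVec d i = γ t
    · rw [h, lp.single_apply_self, hre]
      by_cases hi : i = τ (t + 1)
      · have hx : x = γ (t + 1) := by
          have hx1 : x = γ t + dirVec d i := sub_eq_iff_eq_add.mp h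
          have hx2 : γ (t + 1) = dirVec d (τ (t + 1)) + γ t := sub_eq_iff_eq_add.mp hs
          rw [hx1, hx2, hi, add_comm]
        subst hi
        rw [hx]
        simp only [lp.coeFn_smul, Pi.smul_apply]
        rw [lp.single_apply_self]
      · simp only [lp.coeFn_smul, Pi.smul_apply]
        have h1 : (r • e') i = 0 := by
          simp [he', coinVec, EuclideanSpace.single_apply, hi]
        rw [h1]
        by_cases hx : x = γ (t + 1)
        · rw [hx, lp.single_apply_self]
          simp [he', coinVec, EuclideanSpace.single_apply, hi]
        · rw [lp.single_apply_ne _ _ _ hx]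
          simp
    · rw [lp.single_apply_ne _ _ _ h, map_zero]
      simp only [lp.coeFn_smul, Pi.smul_apply]
      by_cases hx : x = γ (t + 1)
      · by_cases hi : i = τ (t + 1)
        · exfalso
          apply h
          rw [hx, hi, ← hs, sub_sub_cancel]
        · rw [hx, lp.single_apply_self]
          simp [he', coinVec, EuclideanSpace.single_apply, hi]
      · rw [lp.single_apply_ne _ _ _ hx]
        simp
  -- multi-step propagation
  have hstepn : ∀ n t : ℕ, 1 ≤ t → ∃ c : ℂ, ‖c‖ = 1 ∧
      (U ^ n) (leadVec d (γ t) (τ t)) = c • leadVec d (γ (t + n)) (τ (t + n)) := by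
    intro n
    induction n with
    | zero => intro t ht; exact ⟨1, by norm_num, by simp⟩
    | succ n ih =>
      intro t ht
      obtain ⟨c, hc, hcv⟩ := ih t ht
      obtain ⟨c', hc', hcv'⟩ := hstep1 (t + n) (by omega)
      refine ⟨c * c', by rw [norm_mul, hc, hc', one_mul], ?_⟩
      rw [pow_succ', ContinuousLinearMap.mul_apply, hcv, map_smul, hcv', smul_smul, Nat.add_assoc]
  -- Part (i)
  have part1 : ∀ s t : ℕ, 1 ≤ s → 1 ≤ t → s ≠ t →
      leadProj d (γ t) (τ t) * leadProj d (γ s) (τ s) = 0 := by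
    intro s t hs ht hne
    ext1 ψ
    simp only [ContinuousLinearMap.mul_apply, stmt12_leadProj_apply, map_smul, inner_smul_right,
      hinner_ne s t hs ht hne, zero_apply]
    simp [smul_smul]
  -- conjugation of the rank-one projections
  have hconj : ∀ t : ℕ, 1 ≤ t →
      U * leadProj d (γ t) (τ t) * adjoint U = leadProj d (γ (t + 1)) (τ (t + 1)) := by
    intro t ht
    obtain ⟨c, hc, hcv⟩ := hstep1 t ht
    exact stmt12_conj_rankOne d U _ _ c hc hcv
  -- Part (ii)
  have part2gen : ∀ n t : ℕ, 1 ≤ t →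
      U ^ n * leadProj d (γ t) (τ t) * (adjoint U) ^ n
        = leadProj d (γ (t + n)) (τ (t + n)) := by
    intro n
    induction n with
    | zero => intro t ht; simp
    | succ n ih =>
      intro t ht
      have h1 : U ^ (n + 1) * leadProj d (γ t) (τ t) * (adjoint U) ^ (n + 1)
          = U * (U ^ n * leadProj d (γ t) (τ t) * (adjoint U) ^ n) * adjoint U := by
        rw [pow_succ' U n, pow_succ (adjoint U) n]
        simp only [mul_assoc]
      rw [h1, ih t ht, hconj (t + n) (by omega), Nat.add_assoc]
  have part2 : ∀ n : ℕ, 1 ≤ n →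
      U ^ n * leadProj d (γ 1) (τ 1) * (adjoint U) ^ n
        = leadProj d (γ (1 + n)) (τ (1 + n)) := by
    intro n hn; exact part2gen n 1 le_rfl
  -- Part (iii)
  have part3 : ∀ x ∈ LinearMap.range (leadProj d (γ 1) (τ 1) : QWH d →ₗ[ℂ] QWH d),
      ∀ y ∈ LinearMap.range (leadProj d (γ 1) (τ 1) : QWH d →ₗ[ℂ] QWH d),
      ∀ k : ℕ, 1 ≤ k → @inner ℂ _ _ ((U ^ k) x) y = 0 := by
    intro x hx y hy k hk
    obtain ⟨zx, hzx⟩ := hx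
    obtain ⟨zy, hzy⟩ := hy
    obtain ⟨c, hc, hcv⟩ := hstepn k 1 le_rfl
    have hxe : x = (@inner ℂ _ _ (leadVec d (γ 1) (τ 1)) zx) • leadVec d (γ 1) (τ 1) := by
      rw [← hzx]; exact (stmt12_leadProj_apply d _ _ zx)
    have hye : y = (@inner ℂ _ _ (leadVec d (γ 1) (τ 1)) zy) • leadVec d (γ 1) (τ 1) := by
      rw [← hzy]; exact (stmt12_leadProj_apply d _ _ zy)
    rw [hxe, hye, map_smul, hcv]
    rw [inner_smul_left, inner_smul_left, inner_smul_right,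
      hinner_ne 1 (1 + k) le_rfl (by omega) (by omega)]
    ring
  -- Part (iv)
  set w : QWH d := adjoint U (leadVec d (γ 1) (τ 1)) with hw
  have hww : @inner ℂ _ _ w w = 1 := by
    rw [hw, adjoint_inner_left]
    have h2 : U (adjoint U (leadVec d (γ 1) (τ 1))) = leadVec d (γ 1) (τ 1) := by
      have := congrArg (fun A => A (leadVec d (γ 1) (τ 1))) hUunit.2
      simpa [mul_apply] using this
    rw [h2, stmt12_inner_leadVec]
    simp
  have hw0 : w ≠ 0 := by
    intro h; rw [h] at hww; simp at hww
  -- Φ is the rank-one projection onto w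
  have hΦeq : ∀ ψ : QWH d, Φ ψ = (@inner ℂ _ _ w ψ) • w := by
    intro ψ
    set W : ℕ → QWH d := fun t => adjoint U (leadVec d (γ t) (τ t)) with hW
    -- sum for U* Ptot U ψ
    have h1 : HasSum (fun t : {t : ℕ // 1 ≤ t} => (@inner ℂ _ _ (W t.1) ψ) • W t.1)
        (adjoint U (Ptot (U ψ))) := by
      have h0 := (hPtot (U ψ)).mapL (adjoint U)
      convert h0 using 2 with t
      rw [stmt12_leadProj_apply, map_smul, hW]
      congr 1
      rw [adjoint_inner_left]
    -- reindex over ℕ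
    set F : ℕ → QWH d := fun n => (@inner ℂ _ _ (W (n + 1)) ψ) • W (n + 1) with hF
    have h2 : HasSum F (adjoint U (Ptot (U ψ))) := by
      have h2' := (Equiv.hasSum_iff natSuccEquiv).mpr h1
      have h3' : ((fun t : {t : ℕ // 1 ≤ t} => (@inner ℂ _ _ (W t.1) ψ) • W t.1)
          ∘ ⇑natSuccEquiv) = F := by funext n; rfl
      rwa [h3'] at h2'
    have h3 : HasSum (fun n : ℕ => F (n + 1)) (Ptot ψ) := by
      have h4 : HasSum (fun n : ℕ => leadProj d (γ (n + 1)) (τ (n + 1)) ψ) (Ptot ψ) := by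
        have h4' := (Equiv.hasSum_iff natSuccEquiv).mpr (hPtot ψ)
        have h5' : ((fun t : {t : ℕ // 1 ≤ t} => leadProj d (γ t.1) (τ t.1) ψ)
            ∘ ⇑natSuccEquiv) = fun n : ℕ => leadProj d (γ (n + 1)) (τ (n + 1)) ψ := by
          funext n; rfl
        rwa [h5'] at h4'
      convert h4 using 2 with n
      -- F (n+1) = leadProj (n+1) ψ
      obtain ⟨c, hc, hcv⟩ := hstep1 (n + 1) (by omega)
      have hv : leadVec d (γ (n + 1)) (τ (n + 1)) = c • W (n + 2) := by
        rw [hW]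
        have h5 : adjoint U (U (leadVec d (γ (n + 1)) (τ (n + 1))))
            = leadVec d (γ (n + 1)) (τ (n + 1)) := by
          have := congrArg (fun A => A (leadVec d (γ (n + 1)) (τ (n + 1)))) hUunit.1
          simpa [mul_apply] using this
        rw [← h5, hcv, map_smul]
      rw [hF, stmt12_leadProj_apply, hv]
      simp only [inner_smul_left, inner_smul_right, smul_smul]
      have hcc : (starRingEnd ℂ) c * @inner ℂ _ _ (W (n + 2)) ψ * c
          = @inner ℂ _ _ (W (n + 2)) ψ := by
        linear_combination (@inner ℂ _ _ (W (n + 2)) ψ) * stmt12_conj_mul_of_norm_one hc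
      rw [hcc]
    have h5 := (hasSum_nat_add_iff (f := F) 1).mp h3
    rw [Finset.sum_range_one] at h5
    have h6 : adjoint U (Ptot (U ψ)) = Ptot ψ + F 0 := h2.unique h5
    have hF0 : F 0 = (@inner ℂ _ _ w ψ) • w := rfl
    rw [hΦ]
    simp only [sub_apply, ContinuousLinearMap.mul_apply]
    rw [h6, hF0]
    abel
  -- kernels
  have hker1 : LinearMap.ker ((Φ - 1 : QWH d →L[ℂ] QWH d) : QWH d →ₗ[ℂ] QWH d) = Submodule.span ℂ {w} := by
    ext ψ
    rw [LinearMap.mem_ker, Submodule.mem_span_singleton]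
    constructor
    · intro h
      have h1 : Φ ψ - ψ = 0 := by simpa [sub_apply, one_apply] using h
      refine ⟨@inner ℂ _ _ w ψ, ?_⟩
      rw [← hΦeq, ← sub_eq_zero]
      exact h1
    · rintro ⟨a, rfl⟩
      have : Φ (a • w) = a • w := by
        rw [hΦeq, inner_smul_right, hww, mul_one]
      show (Φ - 1) (a • w) = 0
      rw [sub_apply, ContinuousLinearMap.one_apply, this, sub_self]
  have hker2 : LinearMap.ker ((Φ + 1 : QWH d →L[ℂ] QWH d) : QWH d →ₗ[ℂ] QWH d) = ⊥ := by
    rw [Submodule.eq_bot_iff]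
    intro ψ h
    rw [LinearMap.mem_ker] at h
    have h1 : Φ ψ + ψ = 0 := by simpa [add_apply, one_apply] using h
    have h2 : @inner ℂ _ _ w (Φ ψ + ψ) = 0 := by rw [h1, inner_zero_right]
    rw [inner_add_right, hΦeq, inner_smul_right, hww, mul_one] at h2
    have h3 : @inner ℂ _ _ w ψ = 0 := by
      have : (2 : ℂ) * @inner ℂ _ _ w ψ = 0 := by linear_combination h2
      simpa using this
    have h4 : Φ ψ = 0 := by rw [hΦeq, h3, zero_smul]
    rw [h4, zero_add] at h1
    exact h1
  refine ⟨part1, part2, part3, ?_, ?_, ?_⟩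
  · rw [hker1]; infer_instance
  · rw [hker2]; infer_instance
  · rw [hker1, hker2, finrank_span_singleton hw0, finrank_bot]
    norm_num
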